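/- If S is an m×m unitary complex matrix, then for every positive integer n the n-boson representation B_n(S) is a unitary matrix. -/

import Mathlib

namespace BSF

variable {α : Type*} [Fintype α] [DecidableEq α]

/-- The canonical list in which each index `i` is repeated `ν i` times. -/
noncomputable def repList (ν : α → ℕ) : List α :=
  Finset.univ.toList.flatMap fun i => List.replicate (ν i) i

set_option linter.unusedSectionVars false in
lemma repList_length (ν : α → ℕ) : (repList ν).length = ∑ i, ν i := by
  simp [repList, List.length_flatMap]

/-- The index set `T(m,n)`: occupation-number tuples with total `n`. -/
def BosonIdx (α : Type*) [Fintype α] (n : ℕ) := {ν : α → ℕ // ∑ i, ν i = n}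

instance {n : ℕ} : DecidableEq (BosonIdx α n) :=
  inferInstanceAs (DecidableEq {ν : α → ℕ // ∑ i, ν i = n})

noncomputable instance {n : ℕ} : Fintype (BosonIdx α n) :=
  Fintype.ofInjective
    (fun ν : BosonIdx α n => fun i : α =>
      (⟨ν.1 i, by
        have h := Finset.single_le_sum (f := ν.1) (fun j _ => Nat.zero_le _) (Finset.mem_univ i)
        rw [ν.2] at h
        omega⟩ : Fin (n + 1)))
    (fun a b hab => Subtype.ext (funext fun i => congrArg Fin.val (congrFun hab i)))

/-- The permanent of a square complex matrix. -/
noncomputable def permanent {n : ℕ} (M : Matrix (Fin n) (Fin n) ℂ) : ℂ :=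
  ∑ σ : Equiv.Perm (Fin n), ∏ i, M (σ i) i

/-- The canonical repetition function associated with an occupation tuple. -/
noncomputable def repFun {n : ℕ} (ν : BosonIdx α n) : Fin n → α :=
  fun k => (repList ν.1).get (Fin.cast ((repList_length ν.1).trans ν.2).symm k)

/-- The `n`-boson representation of a matrix `S`. -/
noncomputable def bosonRep (n : ℕ) (S : Matrix α α ℂ) :
    Matrix (BosonIdx α n) (BosonIdx α n) ℂ :=
  Matrix.of fun ν ν' =>
    permanent (Matrix.of fun k l => S (repFun ν k) (repFun ν' l)) /
      (Real.sqrt ((∏ i, (ν.1 i).factorial * (ν'.1 i).factorial : ℕ) : ℝ) : ℂ)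

/-- Relabeling an occupation tuple by (precomposition with) a permutation of the modes. -/
def permIdx {n : ℕ} (σ : Equiv.Perm α) (ν : BosonIdx α n) : BosonIdx α n :=
  ⟨ν.1 ∘ σ, show ∑ i, ν.1 (σ i) = n from (Equiv.sum_comp σ ν.1).trans ν.2⟩

variable {n : ℕ}
def cnt (g : Fin n → α) (i : α) : ℕ := (Finset.univ.filter fun k => g k = i).card

set_option linter.unusedSectionVars false in
lemma sum_cnt (g : Fin n → α) : ∑ i, cnt g i = n := by
  have := Finset.card_eq_sum_card_fiberwise
    (f := g) (s := Finset.univ) (t := Finset.univ) (fun x _ => Finset.mem_univ _)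
  simpa [cnt] using this.symm

set_option linter.unusedSectionVars false in
lemma count_repList (ν : α → ℕ) (i : α) : (repList ν).count i = ν i := by
  rw [repList, List.count_flatMap]
  have h : ∀ j ∈ Finset.univ.toList, (List.count i ∘ fun j => List.replicate (ν j) j) j
      = if i = j then ν j else 0 := by
    intro j _
    simp only [Function.comp_apply, List.count_replicate]
    by_cases h : j = i
    · simp [h]
    · rw [if_neg (by simpa using h), if_neg (fun e : i = j => h e.symm)]
  rw [List.map_congr_left h, Finset.sum_map_toList]
  simp

lemma cnt_repFun (ν : BosonIdx α n) (i : α) : cnt (repFun ν) i = ν.1 i := by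
  classical
  let v : List.Vector α n := ⟨repList ν.1, (repList_length ν.1).trans ν.2⟩
  have hv : repFun ν = v.get := rfl
  rw [cnt, hv]
  have := Fin.card_filter_univ_eq_vector_get_eq_count i v
  simpa using this.trans (count_repList ν.1 i)

set_option linter.unusedSectionVars false in
/-- Permutations carrying `h` to `g` correspond to families of fiber bijections. -/
noncomputable def stabEquiv (g h : Fin n → α) :
    {σ : Equiv.Perm (Fin n) // g ∘ σ = h} ≃ (∀ i, {k // h k = i} ≃ {k // g k = i}) where
  toFun σ i :=
    { toFun := fun k => ⟨σ.1 k.1, by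
        have := congrFun σ.2 k.1
        simp only [Function.comp_apply] at this
        rw [this, k.2]⟩
      invFun := fun k => ⟨σ.1.symm k.1, by
        have := congrFun σ.2 (σ.1.symm k.1)
        simp only [Function.comp_apply, Equiv.apply_symm_apply] at this
        rw [← this, k.2]⟩
      left_inv := fun k => Subtype.ext (σ.1.symm_apply_apply k.1)
      right_inv := fun k => Subtype.ext (σ.1.apply_symm_apply k.1) }
  invFun e := ⟨Equiv.ofFiberEquiv e, funext fun k => Equiv.ofFiberEquiv_map e k⟩
  left_inv := by
    rintro ⟨σ, hσ⟩
    apply Subtype.ext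
    apply Equiv.ext
    intro x
    simp [Equiv.ofFiberEquiv]
  right_inv := by
    intro e
    funext i
    apply Equiv.ext
    rintro ⟨k, rfl⟩
    apply Subtype.ext
    simp only [Equiv.ofFiberEquiv, Equiv.trans_apply, Equiv.sigmaCongrRight_apply]
    rfl

set_option linter.unusedSectionVars false in
lemma card_stab (g h : Fin n → α) :
    Fintype.card {σ : Equiv.Perm (Fin n) // g ∘ σ = h}
      = if cnt h = cnt g then ∏ i, (cnt g i).factorial else 0 := by
  classical
  rw [Fintype.card_congr (stabEquiv g h), Fintype.card_pi]
  have hcard : ∀ (f : Fin n → α) (i : α), Fintype.card {k // f k = i} = cnt f i := by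
    intro f i
    simp [cnt, Fintype.card_subtype]
  split_ifs with hc
  · refine Finset.prod_congr rfl fun i _ => ?_
    have e : {k // h k = i} ≃ {k // g k = i} :=
      Fintype.equivOfCardEq (by rw [hcard, hcard, congrFun hc i])
    rw [Fintype.card_equiv e, hcard, congrFun hc i]
  · obtain ⟨i, hi⟩ : ∃ i, cnt h i ≠ cnt g i := by
      by_contra hcon
      push_neg at hcon
      exact hc (funext hcon)
    refine Finset.prod_eq_zero (Finset.mem_univ i) ?_
    rw [Fintype.card_eq_zero_iff]
    constructor
    intro e
    exact hi (by rw [← hcard h i, ← hcard g i, Fintype.card_congr e])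

set_option linter.unusedSectionVars false in
lemma card_filter_stab (g h : Fin n → α) :
    (Finset.univ.filter fun σ : Equiv.Perm (Fin n) => g ∘ σ = h).card
      = if cnt h = cnt g then ∏ i, (cnt g i).factorial else 0 := by
  classical
  rw [← card_stab g h]
  simp [Fintype.card_subtype]

set_option linter.unusedSectionVars false in
lemma sum_comp_perm (g : Fin n → α) (F : (Fin n → α) → ℂ) :
    ∑ σ : Equiv.Perm (Fin n), F (g ∘ σ)
      = ∑ h : Fin n → α,
          ((Finset.univ.filter fun σ : Equiv.Perm (Fin n) => g ∘ σ = h).card : ℂ) * F h := by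
  classical
  have key := Finset.sum_fiberwise_of_maps_to'
      (s := (Finset.univ : Finset (Equiv.Perm (Fin n))))
      (t := (Finset.univ : Finset (Fin n → α)))
      (g := fun σ : Equiv.Perm (Fin n) => g ∘ ⇑σ)
      (fun _ _ => Finset.mem_univ _) F
  rw [← key]
  refine Finset.sum_congr rfl fun h _ => ?_
  rw [Finset.sum_const, nsmul_eq_mul]

set_option linter.unusedSectionVars false in
lemma resum (F : (Fin n → α) → ℂ) :
    ∑ μ : BosonIdx α n, ((∏ i, (μ.1 i).factorial : ℕ) : ℂ)⁻¹ *
        ∑ σ : Equiv.Perm (Fin n), F (repFun μ ∘ σ)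
      = ∑ h : Fin n → α, F h := by
  classical
  have step1 : ∀ μ : BosonIdx α n,
      ((∏ i, (μ.1 i).factorial : ℕ) : ℂ)⁻¹ * ∑ σ : Equiv.Perm (Fin n), F (repFun μ ∘ σ)
        = ∑ h : Fin n → α, if cnt h = μ.1 then F h else 0 := by
    intro μ
    rw [sum_comp_perm, Finset.mul_sum]
    refine Finset.sum_congr rfl fun h _ => ?_
    rw [card_filter_stab, funext (cnt_repFun μ)]
    have hne : ((∏ i, (μ.1 i).factorial : ℕ) : ℂ) ≠ 0 :=
      Nat.cast_ne_zero.mpr (Finset.prod_ne_zero_iff.mpr fun i _ => (Nat.factorial_pos _).ne')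
    split_ifs with hc
    · rw [← mul_assoc, inv_mul_cancel₀ hne, one_mul]
    · simp
  rw [Finset.sum_congr rfl fun μ _ => step1 μ, Finset.sum_comm]
  refine Finset.sum_congr rfl fun h _ => ?_
  have hiff : ∀ μ : BosonIdx α n,
      (if cnt h = μ.1 then F h else 0) =
        if (⟨cnt h, sum_cnt h⟩ : BosonIdx α n) = μ then F h else 0 := fun μ =>
    if_congr ⟨fun e => Subtype.ext e, fun e => congrArg Subtype.val e⟩ rfl rfl
  rw [Finset.sum_congr rfl fun μ _ => hiff μ]
  convert (Finset.sum_ite_eq (Finset.univ : Finset (BosonIdx α n)) (⟨cnt h, sum_cnt h⟩ : BosonIdx α n) (fun _ => F h)).trans (if_pos (Finset.mem_univ _))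
  exact Iff.rfl

/-- The normalization constant. -/
noncomputable def cC (ν : BosonIdx α n) : ℂ :=
  ((Real.sqrt ((∏ i, (ν.1 i).factorial : ℕ) : ℝ) : ℝ) : ℂ)

set_option linter.unusedSectionVars false in
lemma cC_mul_cC (ν : BosonIdx α n) : cC ν * cC ν = ((∏ i, (ν.1 i).factorial : ℕ) : ℂ) := by
  rw [cC, ← Complex.ofReal_mul, Real.mul_self_sqrt (by positivity)]
  norm_num

set_option linter.unusedSectionVars false in
lemma factC_ne_zero (ν : BosonIdx α n) : ((∏ i, (ν.1 i).factorial : ℕ) : ℂ) ≠ 0 :=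
  Nat.cast_ne_zero.mpr (Finset.prod_ne_zero_iff.mpr fun i _ => (Nat.factorial_pos _).ne')

set_option linter.unusedSectionVars false in
lemma conj_cC (ν : BosonIdx α n) : (starRingEnd ℂ) (cC ν) = cC ν := Complex.conj_ofReal _

set_option linter.unusedSectionVars false in
lemma bosonRep_apply (S : Matrix α α ℂ) (ν ν' : BosonIdx α n) :
    bosonRep n S ν ν'
      = (∑ σ : Equiv.Perm (Fin n), ∏ k, S (repFun ν (σ k)) (repFun ν' k)) / (cC ν * cC ν') := by
  rw [bosonRep, Matrix.of_apply, permanent]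
  congr 1
  rw [cC, cC, ← Complex.ofReal_mul, ← Real.sqrt_mul (by positivity)]
  congr 2
  push_cast
  rw [Finset.prod_mul_distrib]

set_option linter.unusedSectionVars false in
lemma sum_G (S : Matrix α α ℂ) (hS1 : star S * S = 1) (ν ν' : BosonIdx α n) :
    ∑ h : Fin n → α, ∑ π : Equiv.Perm (Fin n),
        (∏ k, (starRingEnd ℂ) (S (h k) (repFun ν k))) * ∏ k, S (h (π k)) (repFun ν' k)
      = if ν = ν' then ((∏ i, (ν.1 i).factorial : ℕ) : ℂ) else 0 := by
  classical
  rw [Finset.sum_comm]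
  have hSS : ∀ b c : α, (∑ x, (starRingEnd ℂ) (S x b) * S x c) = if b = c then 1 else 0 := by
    intro b c
    have h0 : (∑ x, (starRingEnd ℂ) (S x b) * S x c) = (star S * S) b c := by
      rw [Matrix.mul_apply]
      rfl
    rw [h0, hS1, Matrix.one_apply]
  have step : ∀ π : Equiv.Perm (Fin n),
      (∑ h : Fin n → α, (∏ k, (starRingEnd ℂ) (S (h k) (repFun ν k))) *
          ∏ k, S (h (π k)) (repFun ν' k))
        = if (∀ k, repFun ν k = repFun ν' (π.symm k)) then 1 else 0 := by
    intro π
    have h1 : ∀ h : Fin n → α,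
        (∏ k, (starRingEnd ℂ) (S (h k) (repFun ν k))) * ∏ k, S (h (π k)) (repFun ν' k)
          = ∏ k, ((starRingEnd ℂ) (S (h k) (repFun ν k)) * S (h k) (repFun ν' (π.symm k))) := by
      intro h
      rw [Finset.prod_mul_distrib]
      congr 1
      have := Equiv.prod_comp π (fun j => S (h j) (repFun ν' (π.symm j)))
      simp only [Equiv.symm_apply_apply] at this
      exact this
    rw [Finset.sum_congr rfl fun h _ => h1 h]
    have h2 := Finset.sum_prod_piFinset (Finset.univ : Finset α)
      (fun k x => (starRingEnd ℂ) (S x (repFun ν k)) * S x (repFun ν' (π.symm k)))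
    rw [Fintype.piFinset_univ] at h2
    rw [h2, Finset.prod_congr rfl fun k _ => hSS (repFun ν k) (repFun ν' (π.symm k))]
    simp only [Finset.prod_ite_zero, Finset.prod_const_one]
    exact if_congr ⟨fun hc k => hc k (Finset.mem_univ k), fun hc k _ => hc k⟩ rfl rfl
  rw [Finset.sum_congr rfl fun π _ => step π]
  have h3 := Equiv.sum_comp (Equiv.inv (Equiv.Perm (Fin n)))
    (fun π : Equiv.Perm (Fin n) => if (∀ k, repFun ν k = repFun ν' (π k)) then (1 : ℂ) else 0)
  simp only [Equiv.inv_apply] at h3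
  rw [show (fun π : Equiv.Perm (Fin n) =>
      if (∀ k, repFun ν k = repFun ν' (π.symm k)) then (1 : ℂ) else 0)
    = (fun π : Equiv.Perm (Fin n) =>
      if (∀ k, repFun ν k = repFun ν' ((π⁻¹ : Equiv.Perm (Fin n)) k)) then (1 : ℂ) else 0)
    from rfl] at *
  rw [h3]
  have h4 : ∀ π : Equiv.Perm (Fin n),
      (if (∀ k, repFun ν k = repFun ν' (π k)) then (1 : ℂ) else 0)
        = if repFun ν' ∘ ⇑π = repFun ν then 1 else 0 :=
    fun π => if_congr ⟨fun hc => funext fun k => (hc k).symm,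
      fun hc k => (congrFun hc k).symm⟩ rfl rfl
  rw [Finset.sum_congr rfl fun π _ => h4 π, Finset.sum_boole, card_filter_stab]
  have hcν : cnt (repFun ν) = ν.1 := funext (cnt_repFun ν)
  have hcν' : cnt (repFun ν') = ν'.1 := funext (cnt_repFun ν')
  rw [hcν, hcν']
  by_cases hνν' : ν = ν'
  · subst hνν'
    simp
  · rw [if_neg (fun e : ν.1 = ν'.1 => hνν' (Subtype.ext e)), if_neg hνν']
    simp

/-- If `S` is an `m × m` unitary complex matrix, then for every positive
integer `n` the `n`-boson representation `B_n(S)` is a unitary matrix. -/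
theorem bosonRep_mem_unitaryGroup {m n : ℕ} (hn : 0 < n)
    (S : Matrix (Fin m) (Fin m) ℂ) (hS : S ∈ Matrix.unitaryGroup (Fin m) ℂ) :
    bosonRep n S ∈ Matrix.unitaryGroup (BosonIdx (Fin m) n) ℂ := by
  classical
  rw [Matrix.mem_unitaryGroup_iff']
  ext ν ν'
  rw [Matrix.mul_apply, Matrix.one_apply]
  have hS1 : star S * S = 1 := hS.1
  set G : (Fin n → Fin m) → ℂ := fun g => ∑ π : Equiv.Perm (Fin n),
    (∏ k, (starRingEnd ℂ) (S (g k) (repFun ν k))) * ∏ k, S (g (π k)) (repFun ν' k) with hG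
  have hentry : ∀ μ : BosonIdx (Fin m) n,
      (star (bosonRep n S)) ν μ * bosonRep n S μ ν'
        = (cC ν * cC ν')⁻¹ * (((∏ i, (μ.1 i).factorial : ℕ) : ℂ)⁻¹ *
            ∑ σ : Equiv.Perm (Fin n), G (repFun μ ∘ σ)) := by
    intro μ
    rw [Matrix.star_apply, bosonRep_apply, bosonRep_apply, Complex.star_def, map_div₀, map_mul,
      conj_cC, conj_cC, map_sum]
    simp only [map_prod]
    rw [div_mul_div_comm]
    have hden : (cC μ * cC ν) * (cC μ * cC ν')
        = ((∏ i, (μ.1 i).factorial : ℕ) : ℂ) * (cC ν * cC ν') := by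
      rw [← cC_mul_cC μ]; ring
    rw [hden]
    have hnum : (∑ σ : Equiv.Perm (Fin n),
          ∏ k, (starRingEnd ℂ) (S (repFun μ (σ k)) (repFun ν k))) *
        (∑ τ : Equiv.Perm (Fin n), ∏ k, S (repFun μ (τ k)) (repFun ν' k))
        = ∑ σ : Equiv.Perm (Fin n), G (repFun μ ∘ σ) := by
      rw [Finset.sum_mul]
      refine Finset.sum_congr rfl fun σ _ => ?_
      rw [Finset.mul_sum, hG]
      exact (Fintype.sum_equiv (Equiv.mulLeft σ)
        (fun π => (∏ k, (starRingEnd ℂ) (S (repFun μ (σ k)) (repFun ν k))) *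
          ∏ k, S (repFun μ (σ (π k))) (repFun ν' k))
        (fun τ => (∏ k, (starRingEnd ℂ) (S (repFun μ (σ k)) (repFun ν k))) *
          ∏ k, S (repFun μ (τ k)) (repFun ν' k))
        (fun π => rfl)).symm
    rw [hnum, div_eq_mul_inv, mul_inv]
    ring
  rw [Finset.sum_congr rfl fun μ _ => hentry μ, ← Finset.mul_sum, resum G]
  simp only [hG]
  rw [sum_G S hS1 ν ν']
  split_ifs with h
  · subst h
    rw [cC_mul_cC, inv_mul_cancel₀ (factC_ne_zero ν)]
  · rw [mul_zero]

end BSF
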